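/- arXiv:2504.17118 — 2 statements merged into one kernel-verified Lean document; each statement's English description precedes it below -/
import Mathlib

section
/- For any two probability measures P and Q on a measurable space and any measurable event A, the sum of the type-I and type-II error probabilities satisfies Q(A) + P(Aᶜ) ≥ (1/2) · exp(-D(P‖Q)) (the Bretagnolle–Huber inequality). -/
open MeasureTheory
open scoped Classical

/-- Kullback–Leibler divergence `D(P‖Q)` as an extended real number. -/
noncomputable def klDiv {Ω : Type*} [MeasurableSpace Ω] (P Q : Measure Ω) : EReal :=
  if P ≪ Q ∧ Integrable (llr P Q) P then ((∫ x, llr P Q x ∂P : ℝ) : EReal) else ⊤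

/-- Bretagnolle–Huber inequality: `Q(A) + P(Aᶜ) ≥ (1/2) exp(-D(P‖Q))`.
(When `D(P‖Q) = ⊤` the right-hand side is `0` and the inequality is trivial;
this case is recorded as the first disjunct.) -/
theorem bretagnolle_huber {Ω : Type*} [MeasurableSpace Ω] (P Q : Measure Ω)
    [IsProbabilityMeasure P] [IsProbabilityMeasure Q] (A : Set Ω) (hA : MeasurableSet A) :
    klDiv P Q = ⊤ ∨
      2⁻¹ * Real.exp (-(klDiv P Q).toReal) ≤ (Q A).toReal + (P Aᶜ).toReal := by
  by_cases hfin : P ≪ Q ∧ Integrable (llr P Q) P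
  · right
    obtain ⟨hPQ, hint⟩ := hfin
    have hkl : klDiv P Q = ((∫ x, llr P Q x ∂P : ℝ) : EReal) := if_pos ⟨hPQ, hint⟩
    set D : ℝ := ∫ x, llr P Q x ∂P with hD
    have hklD : (klDiv P Q).toReal = D := by rw [hkl]; simp
    set g : Ω → ℝ := fun x => (P.rnDeriv Q x).toReal with hgdef
    have hg_meas : Measurable g := (Measure.measurable_rnDeriv P Q).ennreal_toReal
    have hg_nonneg : ∀ x, 0 ≤ g x := fun x => ENNReal.toReal_nonneg
    have hg_int : Integrable g Q := Measure.integrable_toReal_rnDeriv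
    have hg_int_one : ∫ x, g x ∂Q = 1 := by
      rw [Measure.integral_toReal_rnDeriv hPQ]; simp
    set E : Ω → ℝ := fun x => Real.exp (-llr P Q x / 2) with hEdef
    -- `g • E = √g` a.e. w.r.t. Q
    have hae : (fun x => g x • E x) =ᵐ[Q] fun x => Real.sqrt (g x) := by
      filter_upwards [Measure.rnDeriv_lt_top P Q] with x hx
      by_cases h0 : P.rnDeriv Q x = 0
      · simp [hgdef, h0]
      · have hgx : 0 < g x := ENNReal.toReal_pos h0 hx.ne
        have hllr : llr P Q x = Real.log (g x) := rfl
        have hEx : E x = Real.exp (-Real.log (g x) / 2) := by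
          simp only [hEdef, hllr]
        have hEpos : 0 < E x := by rw [hEx]; exact Real.exp_pos _
        have hsq : (g x * E x) ^ 2 = g x := by
          rw [hEx, mul_pow, sq (Real.exp _), ← Real.exp_add]
          have : -Real.log (g x) / 2 + -Real.log (g x) / 2 = -Real.log (g x) := by ring
          rw [this, Real.exp_neg, Real.exp_log hgx]
          field_simp
        rw [smul_eq_mul, ← Real.sqrt_sq (mul_nonneg hgx.le hEpos.le), hsq]
    have hsq_int : Integrable (fun x => Real.sqrt (g x)) Q := by
      refine Integrable.mono' (hg_int.add (integrable_const 1))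
        (hg_meas.sqrt.aestronglyMeasurable) (Filter.Eventually.of_forall fun x => ?_)
      rw [Real.norm_of_nonneg (Real.sqrt_nonneg _)]
      simp only [Pi.add_apply]
      have hs := Real.sq_sqrt (hg_nonneg x)
      nlinarith [Real.sqrt_nonneg (g x)]
    have hE_int : Integrable E P := by
      refine (integrable_rnDeriv_smul_iff hPQ).mp ?_
      exact hsq_int.congr hae.symm
    have hS_eq : ∫ x, E x ∂P = ∫ x, Real.sqrt (g x) ∂Q := by
      rw [← integral_rnDeriv_smul hPQ (f := E)]
      exact integral_congr_ae hae
    -- Jensen's inequality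
    have hjen : Real.exp (-D / 2) ≤ ∫ x, E x ∂P := by
      have h := convexOn_exp.map_integral_le Real.continuous_exp.continuousOn
        isClosed_univ (f := fun x => -llr P Q x / 2)
        (Filter.Eventually.of_forall fun x => Set.mem_univ _)
        ((hint.neg).div_const 2) (by exact hE_int)
      have heq : ∫ x, -llr P Q x / 2 ∂P = -D / 2 := by
        rw [integral_div, integral_neg]
      rw [heq] at h
      exact h.trans_eq rfl
    -- min/max decomposition
    set m : Ω → ℝ := fun x => min (g x) 1 with hmdef
    set M : Ω → ℝ := fun x => max (g x) 1 with hMdef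
    have hm_meas : Measurable m := hg_meas.min measurable_const
    have hM_meas : Measurable M := hg_meas.max measurable_const
    have hm_nonneg : ∀ x, 0 ≤ m x := fun x => le_min (hg_nonneg x) zero_le_one
    have hM_nonneg : ∀ x, 0 ≤ M x := fun x => le_trans zero_le_one (le_max_right _ _)
    have hm_le_one : ∀ x, m x ≤ 1 := fun x => min_le_right _ _
    have hM_le : ∀ x, M x ≤ g x + 1 := fun x =>
      max_le (by linarith [hg_nonneg x]) (by linarith [hg_nonneg x])
    have hm_int : Integrable m Q := by
      refine Integrable.mono' (integrable_const 1) hm_meas.aestronglyMeasurable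
        (Filter.Eventually.of_forall fun x => ?_)
      rw [Real.norm_of_nonneg (hm_nonneg x)]; exact hm_le_one x
    have hM_int : Integrable M Q := by
      refine Integrable.mono' (hg_int.add (integrable_const 1)) hM_meas.aestronglyMeasurable
        (Filter.Eventually.of_forall fun x => ?_)
      rw [Real.norm_of_nonneg (hM_nonneg x)]; exact hM_le x
    -- Cauchy–Schwarz
    have hsqrt_prod : ∀ x, Real.sqrt (g x) = Real.sqrt (m x) * Real.sqrt (M x) := by
      intro x
      rw [← Real.sqrt_mul (hm_nonneg x)]
      congr 1
      rw [hmdef, hMdef]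
      simp only [min_mul_max, mul_one]
    have hmemm : MemLp (fun x => Real.sqrt (m x)) (ENNReal.ofReal 2) Q := by
      refine MemLp.of_bound hm_meas.sqrt.aestronglyMeasurable 1
        (Filter.Eventually.of_forall fun x => ?_)
      rw [Real.norm_of_nonneg (Real.sqrt_nonneg _)]
      exact Real.sqrt_le_one.mpr (hm_le_one x)
    have hmemM : MemLp (fun x => Real.sqrt (M x)) (ENNReal.ofReal 2) Q := by
      have h2 : (ENNReal.ofReal 2) = (2 : ENNReal) := by norm_num
      rw [h2, memLp_two_iff_integrable_sq hM_meas.sqrt.aestronglyMeasurable]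
      refine hM_int.congr ?_
      refine Filter.Eventually.of_forall fun x => ?_
      show M x = Real.sqrt (M x) ^ 2
      exact (Real.sq_sqrt (hM_nonneg x)).symm
    have hpq : (2 : ℝ).HolderConjugate 2 := Real.holderConjugate_iff.mpr ⟨one_lt_two, by norm_num⟩
    have hCS : ∫ x, Real.sqrt (g x) ∂Q ≤
        (∫ x, m x ∂Q) ^ ((1 : ℝ)/2) * (∫ x, M x ∂Q) ^ ((1 : ℝ)/2) := by
      have h := integral_mul_le_Lp_mul_Lq_of_nonneg hpq
        (Filter.Eventually.of_forall fun x => Real.sqrt_nonneg (m x))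
        (Filter.Eventually.of_forall fun x => Real.sqrt_nonneg (M x)) hmemm hmemM
      have h1 : ∫ x, Real.sqrt (m x) * Real.sqrt (M x) ∂Q = ∫ x, Real.sqrt (g x) ∂Q :=
        integral_congr_ae (Filter.Eventually.of_forall fun x => (hsqrt_prod x).symm)
      have h2 : ∫ x, Real.sqrt (m x) ^ (2 : ℝ) ∂Q = ∫ x, m x ∂Q := by
        refine integral_congr_ae (Filter.Eventually.of_forall fun x => ?_)
        show Real.sqrt (m x) ^ (2:ℝ) = m x
        rw [show ((2:ℝ)) = ((2:ℕ) : ℝ) by norm_num, Real.rpow_natCast]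
        exact Real.sq_sqrt (hm_nonneg x)
      have h3 : ∫ x, Real.sqrt (M x) ^ (2 : ℝ) ∂Q = ∫ x, M x ∂Q := by
        refine integral_congr_ae (Filter.Eventually.of_forall fun x => ?_)
        show Real.sqrt (M x) ^ (2:ℝ) = M x
        rw [show ((2:ℝ)) = ((2:ℕ) : ℝ) by norm_num, Real.rpow_natCast]
        exact Real.sq_sqrt (hM_nonneg x)
      rw [h1, h2, h3] at h
      exact h
    -- bound on ∫ M
    have hM_bound : ∫ x, M x ∂Q ≤ 2 := by
      have : ∫ x, M x ∂Q ≤ ∫ x, (g x + 1) ∂Q :=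
        integral_mono hM_int (hg_int.add (integrable_const 1)) hM_le
      rw [integral_add hg_int (integrable_const 1), hg_int_one] at this
      simp at this
      linarith
    -- bound on ∫ m by error probabilities
    have hm_bound : ∫ x, m x ∂Q ≤ (Q A).toReal + (P Aᶜ).toReal := by
      have hsplit : ∫ x in A, m x ∂Q + ∫ x in Aᶜ, m x ∂Q = ∫ x, m x ∂Q :=
        integral_add_compl hA hm_int
      have hA_le : ∫ x in A, m x ∂Q ≤ (Q A).toReal := by
        have : ∫ x in A, m x ∂Q ≤ ∫ x in A, (1 : ℝ) ∂Q :=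
          setIntegral_mono_on hm_int.integrableOn ((integrableOn_const_iff (C := (1:ℝ))).mpr
            (Or.inr (measure_lt_top Q A))) hA (fun x _ => hm_le_one x)
        simpa [measureReal_def] using this
      have hAc_le : ∫ x in Aᶜ, m x ∂Q ≤ (P Aᶜ).toReal := by
        have : ∫ x in Aᶜ, m x ∂Q ≤ ∫ x in Aᶜ, g x ∂Q :=
          setIntegral_mono_on hm_int.integrableOn hg_int.integrableOn hA.compl
            (fun x _ => min_le_left _ _)
        rwa [Measure.setIntegral_toReal_rnDeriv hPQ Aᶜ] at this
      linarith
    -- combine everything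
    rw [hklD]
    set a : ℝ := ∫ x, m x ∂Q with hadef
    set b : ℝ := ∫ x, M x ∂Q with hbdef
    have ha0 : 0 ≤ a := integral_nonneg hm_nonneg
    have hb0 : 0 ≤ b := integral_nonneg hM_nonneg
    have hS : Real.exp (-D / 2) ≤ a ^ ((1:ℝ)/2) * b ^ ((1:ℝ)/2) :=
      le_trans (hjen.trans_eq hS_eq) hCS
    have hap : (a ^ ((1:ℝ)/2)) ^ 2 = a := by
      rw [← Real.rpow_natCast (a ^ ((1:ℝ)/2)) 2, ← Real.rpow_mul ha0]
      norm_num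
    have hbp : (b ^ ((1:ℝ)/2)) ^ 2 = b := by
      rw [← Real.rpow_natCast (b ^ ((1:ℝ)/2)) 2, ← Real.rpow_mul hb0]
      norm_num
    have hexp : Real.exp (-D) = Real.exp (-D / 2) * Real.exp (-D / 2) := by
      rw [← Real.exp_add]; ring_nf
    have hkey : 2⁻¹ * Real.exp (-D) ≤ a := by
      have he0 : (0:ℝ) < Real.exp (-D / 2) := Real.exp_pos _
      have hx0 : 0 ≤ a ^ ((1:ℝ)/2) := Real.rpow_nonneg ha0 _
      have hy0 : 0 ≤ b ^ ((1:ℝ)/2) := Real.rpow_nonneg hb0 _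
      nlinarith [sq_nonneg (a ^ ((1:ℝ)/2) - b ^ ((1:ℝ)/2)),
        mul_le_mul hS hS he0.le (mul_nonneg hx0 hy0)]
    linarith
  · left
    exact if_neg hfin
end

section
/- Fix σ > 1. Define for step size h = 1/K the error probabilities α_K = Q_Γ((σ²/(σ²-1))(K log σ + log τ_K), K/2) and β_K = P_Γ((1/(σ²-1))(K log σ + log τ_K), K/2). There exists a choice of thresholds τ_K > 0 such that both α_K → 0 and β_K → 0 as K → ∞. -/
open Filter

/-- Regularized lower incomplete Gamma function
`P_Γ(x, a) = (1/Γ(a)) ∫₀^x t^(a-1) e^(-t) dt`. -/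
noncomputable def regLowerGamma (x a : ℝ) : ℝ :=
  (1 / Real.Gamma a) * ∫ t in (0:ℝ)..x, t ^ (a - 1) * Real.exp (-t)

namespace AsymptoticTestAux

open MeasureTheory Set

lemma integrable_aux {s r : ℝ} (hs : 0 < s) (hr : 0 < r) :
    IntegrableOn (fun t : ℝ => t ^ (s - 1) * Real.exp (-(r * t))) (Ioi 0) := by
  have h := integrableOn_rpow_mul_exp_neg_mul_rpow (s := s - 1) (p := 1)
    (by linarith) one_pos hr
  refine h.congr_fun (fun t ht => ?_) measurableSet_Ioi
  simp [Real.rpow_one]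

lemma integral_aux {s r : ℝ} (hs : 0 < s) (hr : 0 < r) :
    ∫ t in Ioi (0:ℝ), t ^ (s - 1) * Real.exp (-(r * t))
      = (1 / r) ^ s * Real.Gamma s :=
  Real.integral_rpow_mul_exp_neg_mul_Ioi hs hr

lemma integrable_one {s : ℝ} (hs : 0 < s) :
    IntegrableOn (fun t : ℝ => t ^ (s - 1) * Real.exp (-t)) (Ioi 0) := by
  have h := integrable_aux hs one_pos
  refine h.congr_fun (fun t ht => ?_) measurableSet_Ioi
  simp

/-- Chernoff bound for the lower incomplete Gamma integral. -/
lemma lower_bound {s x lam : ℝ} (hs : 0 < s) (hx : 0 ≤ x) (hlam : 0 ≤ lam) :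
    ∫ t in (0:ℝ)..x, t ^ (s - 1) * Real.exp (-t)
      ≤ Real.exp (lam * x) * ((1 / (1 + lam)) ^ s * Real.Gamma s) := by
  have h1lam : (0:ℝ) < 1 + lam := by linarith
  rw [intervalIntegral.integral_of_le hx]
  have hg : IntegrableOn
      (fun t : ℝ => Real.exp (lam * x) * (t ^ (s - 1) * Real.exp (-((1 + lam) * t))))
      (Ioi 0) := (integrable_aux hs h1lam).const_mul _
  have step1 : ∫ t in Ioc (0:ℝ) x, t ^ (s - 1) * Real.exp (-t)
      ≤ ∫ t in Ioc (0:ℝ) x,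
          Real.exp (lam * x) * (t ^ (s - 1) * Real.exp (-((1 + lam) * t))) := by
    refine setIntegral_mono_on
      ((integrable_one hs).mono_set Ioc_subset_Ioi_self)
      (hg.mono_set Ioc_subset_Ioi_self) measurableSet_Ioc (fun t ht => ?_)
    have ht0 : 0 < t := ht.1
    have hexp : Real.exp (-t) ≤ Real.exp (lam * x) * Real.exp (-((1 + lam) * t)) := by
      rw [← Real.exp_add]
      apply Real.exp_le_exp.mpr
      nlinarith [ht.2]
    calc t ^ (s - 1) * Real.exp (-t)
        ≤ t ^ (s - 1) * (Real.exp (lam * x) * Real.exp (-((1 + lam) * t))) :=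
          mul_le_mul_of_nonneg_left hexp (Real.rpow_nonneg ht0.le _)
      _ = Real.exp (lam * x) * (t ^ (s - 1) * Real.exp (-((1 + lam) * t))) := by ring
  have step2 : ∫ t in Ioc (0:ℝ) x,
        Real.exp (lam * x) * (t ^ (s - 1) * Real.exp (-((1 + lam) * t)))
      ≤ ∫ t in Ioi (0:ℝ),
        Real.exp (lam * x) * (t ^ (s - 1) * Real.exp (-((1 + lam) * t))) := by
    refine setIntegral_mono_set hg ?_ (HasSubset.Subset.eventuallyLE Ioc_subset_Ioi_self)
    filter_upwards [ae_restrict_mem measurableSet_Ioi] with t ht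
    have ht0 : 0 < t := ht
    positivity
  have step3 : ∫ t in Ioi (0:ℝ),
        Real.exp (lam * x) * (t ^ (s - 1) * Real.exp (-((1 + lam) * t)))
      = Real.exp (lam * x) * ((1 / (1 + lam)) ^ s * Real.Gamma s) := by
    rw [integral_const_mul, integral_aux hs h1lam]
  linarith [step1, step2, step3.le, step3.ge]

/-- Splitting: Γ(s) minus the lower integral is the upper integral. -/
lemma split {s x : ℝ} (hs : 0 < s) (hx : 0 ≤ x) :
    Real.Gamma s - ∫ t in (0:ℝ)..x, t ^ (s - 1) * Real.exp (-t)
      = ∫ t in Ioi x, t ^ (s - 1) * Real.exp (-t) := by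
  have hΓ : Real.Gamma s = ∫ t in Ioi (0:ℝ), t ^ (s - 1) * Real.exp (-t) := by
    have h := integral_aux hs one_pos
    simp only [one_mul, div_one, Real.one_rpow] at h
    exact h.symm
  have hsplit : ∫ t in Ioi (0:ℝ), t ^ (s - 1) * Real.exp (-t)
      = (∫ t in Ioc (0:ℝ) x, t ^ (s - 1) * Real.exp (-t))
        + ∫ t in Ioi x, t ^ (s - 1) * Real.exp (-t) := by
    rw [← setIntegral_union Ioc_disjoint_Ioi_same measurableSet_Ioi
      ((integrable_one hs).mono_set Ioc_subset_Ioi_self)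
      ((integrable_one hs).mono_set (Ioi_subset_Ioi hx)),
      Ioc_union_Ioi_eq_Ioi hx]
  rw [intervalIntegral.integral_of_le hx, hΓ, hsplit]
  ring

/-- Chernoff bound for the upper incomplete Gamma integral. -/
lemma upper_bound {s x lam : ℝ} (hs : 0 < s) (hx : 0 ≤ x) (hlam0 : 0 ≤ lam)
    (hlam1 : lam < 1) :
    Real.Gamma s - ∫ t in (0:ℝ)..x, t ^ (s - 1) * Real.exp (-t)
      ≤ Real.exp (-(lam * x)) * ((1 / (1 - lam)) ^ s * Real.Gamma s) := by
  have h1lam : (0:ℝ) < 1 - lam := by linarith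
  rw [split hs hx]
  have hg : IntegrableOn
      (fun t : ℝ => Real.exp (-(lam * x)) * (t ^ (s - 1) * Real.exp (-((1 - lam) * t))))
      (Ioi 0) := (integrable_aux hs h1lam).const_mul _
  have step1 : ∫ t in Ioi x, t ^ (s - 1) * Real.exp (-t)
      ≤ ∫ t in Ioi x,
          Real.exp (-(lam * x)) * (t ^ (s - 1) * Real.exp (-((1 - lam) * t))) := by
    refine setIntegral_mono_on
      ((integrable_one hs).mono_set (Ioi_subset_Ioi hx))
      (hg.mono_set (Ioi_subset_Ioi hx)) measurableSet_Ioi (fun t ht => ?_)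
    have ht0 : 0 < t := lt_of_le_of_lt hx ht
    have hexp : Real.exp (-t) ≤ Real.exp (-(lam * x)) * Real.exp (-((1 - lam) * t)) := by
      rw [← Real.exp_add]
      apply Real.exp_le_exp.mpr
      have : x < t := ht
      nlinarith
    calc t ^ (s - 1) * Real.exp (-t)
        ≤ t ^ (s - 1) * (Real.exp (-(lam * x)) * Real.exp (-((1 - lam) * t))) :=
          mul_le_mul_of_nonneg_left hexp (Real.rpow_nonneg ht0.le _)
      _ = Real.exp (-(lam * x)) * (t ^ (s - 1) * Real.exp (-((1 - lam) * t))) := by ring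
  have step2 : ∫ t in Ioi x,
        Real.exp (-(lam * x)) * (t ^ (s - 1) * Real.exp (-((1 - lam) * t)))
      ≤ ∫ t in Ioi (0:ℝ),
        Real.exp (-(lam * x)) * (t ^ (s - 1) * Real.exp (-((1 - lam) * t))) := by
    refine setIntegral_mono_set hg ?_ (HasSubset.Subset.eventuallyLE (Ioi_subset_Ioi hx))
    filter_upwards [ae_restrict_mem measurableSet_Ioi] with t ht
    have ht0 : 0 < t := ht
    positivity
  have step3 : ∫ t in Ioi (0:ℝ),
        Real.exp (-(lam * x)) * (t ^ (s - 1) * Real.exp (-((1 - lam) * t)))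
      = Real.exp (-(lam * x)) * ((1 / (1 - lam)) ^ s * Real.Gamma s) := by
    rw [integral_const_mul, integral_aux hs h1lam]
  linarith [step1, step2, step3.le, step3.ge]

lemma lower_integral_nonneg {s x : ℝ} (hx : 0 ≤ x) :
    0 ≤ ∫ t in (0:ℝ)..x, t ^ (s - 1) * Real.exp (-t) := by
  refine intervalIntegral.integral_nonneg hx (fun u hu => ?_)
  have : (0:ℝ) ≤ u := hu.1
  positivity

lemma upper_integral_nonneg {s x : ℝ} (hx : 0 ≤ x) :
    0 ≤ ∫ t in Ioi x, t ^ (s - 1) * Real.exp (-t) := by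
  refine setIntegral_nonneg measurableSet_Ioi (fun t ht => ?_)
  have : 0 < t := lt_of_le_of_lt hx ht
  positivity

/-- `P_Γ(aK, K/2) → 0` when `2a < 1`. -/
lemma tendsto_P_zero {a : ℝ} (ha0 : 0 < a) (ha : 2 * a < 1) :
    Tendsto (fun K : ℕ => regLowerGamma (a * K) ((K : ℝ) / 2)) atTop (nhds 0) := by
  have ha2 : (0:ℝ) < 2 * a := by linarith
  set lam : ℝ := 1 / (2 * a) - 1 with hlam_def
  have h1l : 1 + lam = 1 / (2 * a) := by rw [hlam_def]; ring
  have h1l' : (0:ℝ) < 1 + lam := by rw [h1l]; positivity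
  have hlam : 0 ≤ lam := by
    have : (1:ℝ) < 1 / (2 * a) := (one_lt_div ha2).mpr (by linarith)
    rw [hlam_def]; linarith
  have hinv : (1:ℝ) / (1 + lam) = 2 * a := by
    rw [h1l]; field_simp
  have hla : lam * a = 1 / 2 - a := by
    rw [hlam_def]; field_simp
  set c : ℝ := lam * a + Real.log (1 / (1 + lam)) / 2 with hc
  have hcneg : c < 0 := by
    have hlog := Real.log_lt_sub_one_of_pos ha2 (by linarith)
    rw [hc, hinv, hla]; linarith
  have hbound : ∀ᶠ K : ℕ in atTop,
      regLowerGamma (a * K) ((K : ℝ) / 2) ≤ Real.exp c ^ K := by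
    filter_upwards [eventually_ge_atTop 1] with K hK
    have hK0 : (0:ℝ) < K := by exact_mod_cast hK
    have hs : (0:ℝ) < (K : ℝ) / 2 := by positivity
    have hx : (0:ℝ) ≤ a * K := by positivity
    have hΓ : (0:ℝ) < Real.Gamma ((K : ℝ) / 2) := Real.Gamma_pos_of_pos hs
    have hb := lower_bound (s := (K : ℝ) / 2) (x := a * K) hs hx hlam
    have hrexp : ((1:ℝ) / (1 + lam)) ^ ((K : ℝ) / 2)
        = Real.exp (Real.log (1 / (1 + lam)) * ((K : ℝ) / 2)) :=
      Real.rpow_def_of_pos (by positivity) _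
    have key : regLowerGamma (a * K) ((K : ℝ) / 2)
        ≤ Real.exp (lam * (a * K)) * ((1 / (1 + lam)) ^ ((K : ℝ) / 2)) := by
      rw [regLowerGamma, one_div, inv_mul_le_iff₀ hΓ]
      calc (∫ t in (0:ℝ)..(a * K), t ^ ((K : ℝ) / 2 - 1) * Real.exp (-t))
          ≤ Real.exp (lam * (a * K)) * ((1 / (1 + lam)) ^ ((K : ℝ) / 2) * Real.Gamma ((K:ℝ)/2)) :=
            hb
        _ = Real.Gamma ((K:ℝ)/2)
            * (Real.exp (lam * (a * K)) * ((1 / (1 + lam)) ^ ((K : ℝ) / 2))) := by ring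
    have : Real.exp (lam * (a * K)) * ((1 / (1 + lam)) ^ ((K : ℝ) / 2))
        = Real.exp c ^ K := by
      rw [hrexp, ← Real.exp_add, ← Real.exp_nat_mul]
      congr 1
      rw [hc]; ring
    linarith [key, this.le, this.ge]
  have hnonneg : ∀ᶠ K : ℕ in atTop,
      0 ≤ regLowerGamma (a * K) ((K : ℝ) / 2) := by
    filter_upwards [eventually_ge_atTop 1] with K hK
    have hK0 : (0:ℝ) < K := by exact_mod_cast hK
    have hs : (0:ℝ) < (K : ℝ) / 2 := by positivity
    have hΓ : (0:ℝ) < Real.Gamma ((K : ℝ) / 2) := Real.Gamma_pos_of_pos hs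
    have hx : (0:ℝ) ≤ a * K := by positivity
    have := lower_integral_nonneg (s := (K : ℝ) / 2) hx
    rw [regLowerGamma]
    positivity
  refine squeeze_zero' hnonneg hbound ?_
  exact tendsto_pow_atTop_nhds_zero_of_lt_one (Real.exp_nonneg c)
    (Real.exp_lt_one_iff.mpr hcneg)

/-- `1 - P_Γ(bK, K/2) → 0` when `1 < 2b`. -/
lemma tendsto_Q_zero {b : ℝ} (hb : 1 < 2 * b) :
    Tendsto (fun K : ℕ => 1 - regLowerGamma (b * K) ((K : ℝ) / 2)) atTop (nhds 0) := by
  have hb0 : (0:ℝ) < b := by linarith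
  have hb2 : (0:ℝ) < 2 * b := by linarith
  set lam : ℝ := 1 - 1 / (2 * b) with hlam_def
  have h1l : 1 - lam = 1 / (2 * b) := by rw [hlam_def]; ring
  have hlam0 : 0 ≤ lam := by
    have : 1 / (2 * b) < 1 := (div_lt_one hb2).mpr (by linarith)
    rw [hlam_def]; linarith
  have hlam1 : lam < 1 := by
    have : (0:ℝ) < 1 / (2 * b) := by positivity
    rw [hlam_def]; linarith
  have hinv : (1:ℝ) / (1 - lam) = 2 * b := by
    rw [h1l]; field_simp
  have hlb : lam * b = b - 1 / 2 := by
    rw [hlam_def]; field_simp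
  set c : ℝ := -(lam * b) + Real.log (1 / (1 - lam)) / 2 with hc
  have hcneg : c < 0 := by
    have hlog := Real.log_lt_sub_one_of_pos hb2 (by linarith)
    rw [hc, hinv, hlb]; linarith
  have hbound : ∀ᶠ K : ℕ in atTop,
      1 - regLowerGamma (b * K) ((K : ℝ) / 2) ≤ Real.exp c ^ K := by
    filter_upwards [eventually_ge_atTop 1] with K hK
    have hK0 : (0:ℝ) < K := by exact_mod_cast hK
    have hs : (0:ℝ) < (K : ℝ) / 2 := by positivity
    have hx : (0:ℝ) ≤ b * K := by positivity
    have hΓ : (0:ℝ) < Real.Gamma ((K : ℝ) / 2) := Real.Gamma_pos_of_pos hs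
    have hub := upper_bound (s := (K : ℝ) / 2) (x := b * K) hs hx hlam0 hlam1
    have hrexp : ((1:ℝ) / (1 - lam)) ^ ((K : ℝ) / 2)
        = Real.exp (Real.log (1 / (1 - lam)) * ((K : ℝ) / 2)) :=
      Real.rpow_def_of_pos (by rw [hinv]; positivity) _
    have h1m : 1 - regLowerGamma (b * K) ((K : ℝ) / 2)
        = (Real.Gamma ((K : ℝ) / 2)
            - ∫ t in (0:ℝ)..(b * K), t ^ ((K : ℝ) / 2 - 1) * Real.exp (-t))
          / Real.Gamma ((K : ℝ) / 2) := by
      rw [regLowerGamma]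
      field_simp
    have key : 1 - regLowerGamma (b * K) ((K : ℝ) / 2)
        ≤ Real.exp (-(lam * (b * K))) * ((1 / (1 - lam)) ^ ((K : ℝ) / 2)) := by
      rw [h1m, div_le_iff₀ hΓ]
      calc Real.Gamma ((K : ℝ) / 2)
            - ∫ t in (0:ℝ)..(b * K), t ^ ((K : ℝ) / 2 - 1) * Real.exp (-t)
          ≤ Real.exp (-(lam * (b * K)))
              * ((1 / (1 - lam)) ^ ((K : ℝ) / 2) * Real.Gamma ((K : ℝ) / 2)) := hub
        _ = Real.exp (-(lam * (b * K))) * ((1 / (1 - lam)) ^ ((K : ℝ) / 2))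
              * Real.Gamma ((K : ℝ) / 2) := by ring
    have heq : Real.exp (-(lam * (b * K))) * ((1 / (1 - lam)) ^ ((K : ℝ) / 2))
        = Real.exp c ^ K := by
      rw [hrexp, ← Real.exp_add, ← Real.exp_nat_mul]
      congr 1
      rw [hc]; ring
    linarith [key, heq.le, heq.ge]
  have hnonneg : ∀ᶠ K : ℕ in atTop,
      0 ≤ 1 - regLowerGamma (b * K) ((K : ℝ) / 2) := by
    filter_upwards [eventually_ge_atTop 1] with K hK
    have hK0 : (0:ℝ) < K := by exact_mod_cast hK
    have hs : (0:ℝ) < (K : ℝ) / 2 := by positivity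
    have hx : (0:ℝ) ≤ b * K := by positivity
    have hΓ : (0:ℝ) < Real.Gamma ((K : ℝ) / 2) := Real.Gamma_pos_of_pos hs
    have hsp := split (s := (K : ℝ) / 2) (x := b * K) hs hx
    have hun := upper_integral_nonneg (s := (K : ℝ) / 2) hx
    have hIle : (∫ t in (0:ℝ)..(b * K), t ^ ((K : ℝ) / 2 - 1) * Real.exp (-t))
        ≤ Real.Gamma ((K : ℝ) / 2) := by linarith
    rw [regLowerGamma]
    rw [one_div, ← div_eq_inv_mul]
    have : (∫ t in (0:ℝ)..(b * K), t ^ ((K : ℝ) / 2 - 1) * Real.exp (-t))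
        / Real.Gamma ((K : ℝ) / 2) ≤ 1 := by
      rw [div_le_one hΓ]; exact hIle
    linarith
  refine squeeze_zero' hnonneg hbound ?_
  exact tendsto_pow_atTop_nhds_zero_of_lt_one (Real.exp_nonneg c)
    (Real.exp_lt_one_iff.mpr hcneg)

end AsymptoticTestAux

/-- For `σ > 1` there is a choice of thresholds `τ_K > 0` such that both the type-I error
`α_K = Q_Γ((σ²/(σ²-1))(K log σ + log τ_K), K/2)` and the type-II error
`β_K = P_Γ((1/(σ²-1))(K log σ + log τ_K), K/2)` tend to `0` as `K → ∞`. -/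
theorem asymptotically_perfect_test (σ : ℝ) (hσ : 1 < σ) :
    ∃ τ : ℕ → ℝ, (∀ K, 0 < τ K) ∧
      Tendsto (fun K : ℕ =>
          1 - regLowerGamma ((σ ^ 2 / (σ ^ 2 - 1)) * (K * Real.log σ + Real.log (τ K)))
            ((K : ℝ) / 2)) atTop (nhds 0) ∧
      Tendsto (fun K : ℕ =>
          regLowerGamma ((1 / (σ ^ 2 - 1)) * (K * Real.log σ + Real.log (τ K)))
            ((K : ℝ) / 2)) atTop (nhds 0) := by
  have hσ2 : 1 < σ ^ 2 := by nlinarith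
  have hσ21 : (0:ℝ) < σ ^ 2 - 1 := by linarith
  have hσ2pos : (0:ℝ) < σ ^ 2 := by linarith
  set a : ℝ := (σ ^ 2 + 1) / (4 * σ ^ 2) with ha_def
  have ha0 : 0 < a := by positivity
  have ha : 2 * a < 1 := by
    rw [ha_def, show (2:ℝ) * ((σ ^ 2 + 1) / (4 * σ ^ 2)) = (σ ^ 2 + 1) / (2 * σ ^ 2) by ring,
      div_lt_one (by positivity)]
    linarith
  set b : ℝ := σ ^ 2 * a with hb_def
  have hb : 1 < 2 * b := by
    rw [hb_def, ha_def, show (2:ℝ) * (σ ^ 2 * ((σ ^ 2 + 1) / (4 * σ ^ 2))) = (σ ^ 2 + 1) / 2 by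
      field_simp; ring, lt_div_iff₀ (by norm_num : (0:ℝ) < 2)]
    linarith
  refine ⟨fun K => Real.exp ((a * (σ ^ 2 - 1) - Real.log σ) * K),
    fun K => Real.exp_pos _, ?_, ?_⟩
  · have h := AsymptoticTestAux.tendsto_Q_zero hb
    refine h.congr fun K => ?_
    congr 1
    congr 1
    rw [Real.log_exp]
    field_simp
    ring
  · have h := AsymptoticTestAux.tendsto_P_zero ha0 ha
    refine h.congr fun K => ?_
    congr 1
    rw [Real.log_exp]
    field_simp
    ring
end
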